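/- If b is a rich square-free word over an alphabet A and a is a letter not in A, then the word b·a·reverse(b) is rich and square-free. -/

import Mathlib

/-- A word is a palindrome if it equals its reversal. -/
def Palindromic {α : Type*} (w : List α) : Prop := w.reverse = w

/-- A finite word is rich if it has exactly |w|+1 distinct palindromic factors
(including the empty word). -/
def Rich {α : Type*} (w : List α) : Prop :=
  {p : List α | p <:+: w ∧ Palindromic p}.ncard = w.length + 1

/-- A word is square-free if it has no factor of the form `u ++ u` with `u` nonempty. -/
def SqFree {α : Type*} (w : List α) : Prop :=
  ∀ u : List α, u ≠ [] → ¬ (u ++ u) <:+: w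

/-- Uniqueness of the decomposition around a letter that occurs only once. -/
private lemma split_unique {α : Type*} {a : α} :
    ∀ (u : List α) {v u' v' : List α}, u ++ [a] ++ v = u' ++ [a] ++ v' →
      a ∉ u' → a ∉ v' → u = u' ∧ v = v' := by
  intro u
  induction u with
  | nil =>
      intro v u' v' h hu' hv'
      cases u' with
      | nil =>
          simp only [List.nil_append, List.cons_append, List.cons.injEq] at h
          exact ⟨rfl, h.2⟩
      | cons c u'' =>
          simp only [List.nil_append, List.cons_append, List.cons.injEq] at h
          exact absurd (h.1 ▸ (List.mem_cons_self : c ∈ c :: u'')) hu'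
  | cons c u ih =>
      intro v u' v' h hu' hv'
      cases u' with
      | nil =>
          simp only [List.nil_append, List.cons_append, List.append_assoc,
            List.cons.injEq] at h
          obtain ⟨rfl, h2⟩ := h
          exact absurd (by rw [← h2]; simp) hv'
      | cons c' u'' =>
          simp only [List.cons_append, List.cons.injEq, List.append_assoc] at h
          obtain ⟨rfl, h2⟩ := h
          have hu'' : a ∉ u'' := fun hm => hu' (List.mem_cons_of_mem _ hm)
          obtain ⟨h3, h4⟩ := ih (by simpa [List.append_assoc] using h2) hu'' hv'
          exact ⟨by rw [h3], h4⟩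

/-- A factor of `b ++ [a] ++ b.reverse` not containing `a` is a factor of `b`
or of `b.reverse`. -/
private lemma infix_split {α : Type*} {a : α} {b p : List α} (hab : a ∉ b)
    (h : p <:+: (b ++ [a] ++ b.reverse)) (hap : a ∉ p) :
    p <:+: b ∨ p <:+: b.reverse := by
  have har : a ∉ b.reverse := by simpa using hab
  obtain ⟨s, t, hst⟩ := h
  have hmem : a ∈ s ∨ a ∈ t := by
    have hm : a ∈ s ++ p ++ t := by rw [hst]; simp
    simp only [List.mem_append] at hm
    tauto
  rcases hmem with hs | ht
  · obtain ⟨s1, s2, rfl⟩ := List.append_of_mem hs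
    have heq : s1 ++ [a] ++ (s2 ++ p ++ t) = b ++ [a] ++ b.reverse := by
      simpa [List.append_assoc] using hst
    obtain ⟨-, h2⟩ := split_unique s1 heq hab har
    exact Or.inr ⟨s2, t, by simpa [List.append_assoc] using h2⟩
  · obtain ⟨t1, t2, rfl⟩ := List.append_of_mem ht
    have heq : (s ++ p ++ t1) ++ [a] ++ t2 = b ++ [a] ++ b.reverse := by
      simpa [List.append_assoc] using hst
    obtain ⟨h1, -⟩ := split_unique _ heq hab har
    exact Or.inl ⟨s, t1, by simpa [List.append_assoc] using h1⟩

theorem basic_recursion_rich_squarefree {α : Type*} (b : List α) (a : α)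
    (hrich : Rich b) (hsf : SqFree b) (ha : a ∉ b) :
    Rich (b ++ [a] ++ b.reverse) ∧ SqFree (b ++ [a] ++ b.reverse) := by
  classical
  have har : a ∉ b.reverse := by simpa using ha
  constructor
  · -- Richness
    set g : ℕ → List α := fun i => b.drop i ++ [a] ++ (b.drop i).reverse with hg
    set S1 : Set (List α) := {p : List α | p <:+: b ∧ Palindromic p} with hS1
    set S2 : Set (List α) := g '' Set.Iic b.length with hS2
    have hset : {p : List α | p <:+: (b ++ [a] ++ b.reverse) ∧ Palindromic p} = S1 ∪ S2 := by
      ext p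
      simp only [Set.mem_setOf_eq, Set.mem_union]
      constructor
      · rintro ⟨hinf, hpal⟩
        by_cases hap : a ∈ p
        · right
          obtain ⟨s, t, hst⟩ := hinf
          obtain ⟨x, y, rfl⟩ := List.append_of_mem hap
          have heq : (s ++ x) ++ [a] ++ (y ++ t) = b ++ [a] ++ b.reverse := by
            simpa [List.append_assoc] using hst
          obtain ⟨h1, h2⟩ := split_unique _ heq ha har
          have hax : a ∉ x := fun hm => ha (h1 ▸ List.mem_append_right s hm)
          have hay : a ∉ y := fun hm => har (h2 ▸ List.mem_append_left t hm)
          have hpal' : y.reverse ++ [a] ++ x.reverse = x ++ [a] ++ (a :: y).tail := by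
            have := hpal
            simp only [Palindromic, List.reverse_append, List.reverse_cons,
              List.append_assoc] at this ⊢
            simpa [List.append_assoc] using this
          obtain ⟨hyx, hxy⟩ := split_unique _ (by simpa using hpal') hax hay
          refine ⟨s.length, ?_, ?_⟩
          · simp only [Set.mem_Iic, ← h1]
            simp
          · have hdrop : b.drop s.length = x := by
              rw [← h1]; exact List.drop_left
            simp only [hg, hdrop]
            rw [← hxy]
            simp [hyx]
        · left
          have := infix_split ha hinf hap
          rcases this with h | h
          · exact ⟨h, hpal⟩
          · have h' : p.reverse <:+: b.reverse.reverse := List.reverse_infix.mpr h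
            rw [hpal, List.reverse_reverse] at h'
            exact ⟨h', hpal⟩
      · rintro (⟨hinf, hpal⟩ | ⟨i, hi, rfl⟩)
        · refine ⟨hinf.trans ⟨[], [a] ++ b.reverse, by simp [List.append_assoc]⟩, hpal⟩
        · constructor
          · have key : b ++ [a] ++ b.reverse = b.take i ++ (g i) ++ (b.take i).reverse := by
              conv_lhs => rw [← List.take_append_drop i b]
              simp only [hg, List.reverse_append, List.append_assoc]
            exact ⟨b.take i, (b.take i).reverse, key.symm⟩
          · simp [hg, Palindromic, List.reverse_append, List.append_assoc]
    have hfin1 : S1.Finite := by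
      apply Set.Finite.subset (b.sublists.toFinset.finite_toSet)
      intro p hp
      simp only [Finset.mem_coe, List.mem_toFinset, List.mem_sublists]
      exact hp.1.sublist
    have hfin2 : S2.Finite := (Set.finite_Iic b.length).image g
    have hdisj : Disjoint S1 S2 := by
      rw [Set.disjoint_left]
      rintro p ⟨hinf, -⟩ ⟨i, -, rfl⟩
      exact ha (hinf.sublist.subset (by simp [hg]))
    have hinj : Set.InjOn g (Set.Iic b.length) := by
      intro i hi j hj hij
      have hlen := congrArg List.length hij
      simp only [hg, List.length_append, List.length_reverse, List.length_drop] at hlen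
      simp only [Set.mem_Iic] at hi hj
      omega
    have hS2card : S2.ncard = b.length + 1 := by
      rw [hS2, Set.ncard_image_of_injOn hinj]
      have : Set.Iic b.length = ↑(Finset.Iic b.length) := by ext; simp
      rw [this, Set.ncard_coe_finset, Nat.card_Iic]
    have hcard : ({p : List α | p <:+: (b ++ [a] ++ b.reverse) ∧ Palindromic p}).ncard
        = (b.length + 1) + (b.length + 1) := by
      rw [hset, Set.ncard_union_eq hdisj hfin1 hfin2, hrich, hS2card]
    rw [Rich, hcard]
    simp
    omega
  · -- Square-freeness
    intro u hu hinf
    by_cases hau : a ∈ u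
    · have hsub := hinf.sublist
      have hle := hsub.count_le a
      have hwc : (b ++ [a] ++ b.reverse).count a = 1 := by
        simp [List.count_append, List.count_eq_zero_of_not_mem ha,
          List.count_eq_zero_of_not_mem har]
      have huc : 0 < u.count a := List.count_pos_iff.mpr hau
      rw [List.count_append, hwc] at hle
      omega
    · have hap : a ∉ u ++ u := by simp [hau]
      rcases infix_split ha hinf hap with h | h
      · exact hsf u hu h
      · have h' : (u ++ u).reverse <:+: b.reverse.reverse := List.reverse_infix.mpr h
        rw [List.reverse_reverse, List.reverse_append] at h'
        exact hsf u.reverse (by simpa using hu) h'
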